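/- Suppose β > 0 with β ≠ 1, and let α > 0 and η > 0. Then there exist constants c₁, c₂, c₃ ≥ 0 (depending only on α, β, η) such that for every real r > max(1, η^{1/α}), the truncated expectation satisfies E[ (η W₁ W₂ / r^α) · 1{ W₁ W₂ < r^α / η } ] ≤ c₁ r^{−α} + c₂ r^{−αβ} log r + c₃ r^{−αβ}. -/

import Mathlib

open MeasureTheory Set Real
open scoped ENNReal

/-- The Pareto(β) probability measure on `ℝ`, with density `w ↦ β w^{−β−1} 1_{[1,∞)}(w)`
with respect to Lebesgue measure. -/
noncomputable def pareto (β : ℝ) : Measure ℝ :=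
  volume.withDensity (Set.indicator (Set.Ici 1) fun w => ENNReal.ofReal (β * w ^ (-β - 1)))

noncomputable def pdens (β : ℝ) : ℝ → ℝ≥0∞ :=
  Set.indicator (Set.Ici 1) fun w => ENNReal.ofReal (β * w ^ (-β - 1))

lemma pareto_eq_withDensity (β : ℝ) : pareto β = volume.withDensity (pdens β) := rfl

instance pareto_sfinite (β : ℝ) : SFinite (pareto β) :=
  Measure.withDensity.instSFinite

lemma pdens_of_mem {β w : ℝ} (h : 1 ≤ w) :
    pdens β w = ENNReal.ofReal (β * w ^ (-β - 1)) := Set.indicator_of_mem h _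

lemma pdens_of_not_mem {β w : ℝ} (h : ¬ 1 ≤ w) : pdens β w = 0 :=
  Set.indicator_of_notMem h _

lemma pdens_measurable (β : ℝ) : Measurable (pdens β) := by
  apply Measurable.indicator _ measurableSet_Ici
  apply Measurable.ennreal_ofReal
  fun_prop

lemma lint_Ico_rpow {c p T : ℝ} (hc : 0 ≤ c) (hT : 1 ≤ T) (hp : p ≠ -1) :
    ∫⁻ w in Set.Ico 1 T, ENNReal.ofReal (c * w ^ p) =
      ENNReal.ofReal (c * ((T ^ (p + 1) - 1) / (p + 1))) := by
  have h0 : (0:ℝ) ∉ Set.uIcc 1 T := notMem_uIcc_of_lt zero_lt_one (by linarith)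
  have hco : ContinuousOn (fun w : ℝ => c * w ^ p) (Set.Icc 1 T) := by
    apply continuousOn_const.mul
    exact ContinuousOn.rpow_const continuousOn_id
      (fun x hx => Or.inl (ne_of_gt (by linarith [hx.1])))
  have hint : IntegrableOn (fun w : ℝ => c * w ^ p) (Set.Ioc 1 T) :=
    (hco.integrableOn_Icc).mono_set Set.Ioc_subset_Icc_self
  have hnn : 0 ≤ᵐ[volume.restrict (Set.Ioc 1 T)] fun w : ℝ => c * w ^ p := by
    refine (ae_restrict_iff' measurableSet_Ioc).2 (ae_of_all _ ?_)
    intro w hw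
    exact mul_nonneg hc (Real.rpow_nonneg (by linarith [hw.1]) p)
  have heq : volume.restrict (Set.Ico (1:ℝ) T) = volume.restrict (Set.Ioc 1 T) := by
    refine Measure.restrict_congr_set ?_
    exact (Ioo_ae_eq_Ico (μ := volume) (a := (1:ℝ)) (b := T)).symm.trans Ioo_ae_eq_Ioc
  rw [heq, ← MeasureTheory.ofReal_integral_eq_lintegral_ofReal hint hnn]
  congr 1
  rw [← intervalIntegral.integral_of_le hT, intervalIntegral.integral_const_mul,
    integral_rpow (Or.inr ⟨hp, h0⟩), Real.one_rpow]

lemma lint_Ico_inv {c T : ℝ} (hc : 0 ≤ c) (hT : 1 ≤ T) :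
    ∫⁻ w in Set.Ico 1 T, ENNReal.ofReal (c * w⁻¹) = ENNReal.ofReal (c * Real.log T) := by
  have hco : ContinuousOn (fun w : ℝ => c * w⁻¹) (Set.Icc 1 T) :=
    continuousOn_const.mul (continuousOn_id.inv₀
      (fun x hx => ne_of_gt (lt_of_lt_of_le zero_lt_one hx.1)))
  have hint : IntegrableOn (fun w : ℝ => c * w⁻¹) (Set.Ioc 1 T) :=
    (hco.integrableOn_Icc).mono_set Set.Ioc_subset_Icc_self
  have hnn : 0 ≤ᵐ[volume.restrict (Set.Ioc 1 T)] fun w : ℝ => c * w⁻¹ := by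
    refine (ae_restrict_iff' measurableSet_Ioc).2 (ae_of_all _ ?_)
    intro w hw
    exact mul_nonneg hc (inv_nonneg.2 (by linarith [hw.1]))
  have heq : volume.restrict (Set.Ico (1:ℝ) T) = volume.restrict (Set.Ioc 1 T) := by
    refine Measure.restrict_congr_set ?_
    exact (Ioo_ae_eq_Ico (μ := volume) (a := (1:ℝ)) (b := T)).symm.trans Ioo_ae_eq_Ioc
  rw [heq, ← MeasureTheory.ofReal_integral_eq_lintegral_ofReal hint hnn]
  congr 1
  rw [← intervalIntegral.integral_of_le hT, intervalIntegral.integral_const_mul,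
    integral_inv_of_pos zero_lt_one (by linarith), div_one]

lemma lint_Ici_rpow {c p : ℝ} (hc : 0 ≤ c) (hp : p < -1) :
    ∫⁻ w in Set.Ici (1:ℝ), ENNReal.ofReal (c * w ^ p) =
      ENNReal.ofReal (c * (-1 / (p + 1))) := by
  have hint : IntegrableOn (fun w : ℝ => c * w ^ p) (Set.Ioi 1) :=
    (integrableOn_Ioi_rpow_of_lt hp zero_lt_one).const_mul c
  have hnn : 0 ≤ᵐ[volume.restrict (Set.Ioi 1)] fun w : ℝ => c * w ^ p := by
    refine (ae_restrict_iff' measurableSet_Ioi).2 (ae_of_all _ ?_)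
    intro w hw
    exact mul_nonneg hc (Real.rpow_nonneg (by linarith [mem_Ioi.1 hw]) p)
  have heq : volume.restrict (Set.Ici (1:ℝ)) = volume.restrict (Set.Ioi 1) :=
    (Measure.restrict_congr_set Ioi_ae_eq_Ici).symm
  rw [heq, ← MeasureTheory.ofReal_integral_eq_lintegral_ofReal hint hnn]
  congr 1
  rw [MeasureTheory.integral_const_mul, integral_Ioi_rpow_of_lt hp zero_lt_one, Real.one_rpow]

/-- Reduction: to bound the Bochner integral against the product of Pareto measures, it
suffices to bound the corresponding iterated Lebesgue-density lintegral. -/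
lemma reduction (β M : ℝ) (hM : 0 ≤ M) (F : ℝ × ℝ → ℝ) (hF : Measurable F)
    (hFnn : ∀ q : ℝ × ℝ, 1 ≤ q.1 → 1 ≤ q.2 → 0 ≤ F q)
    (h : ∫⁻ w1, pdens β w1 * ∫⁻ w2, pdens β w2 * ENNReal.ofReal (F (w1, w2)) ∂volume ∂volume
        ≤ ENNReal.ofReal M) :
    ∫ q, F q ∂((pareto β).prod (pareto β)) ≤ M := by
  have hdm := pdens_measurable β
  have hc : pareto β ((Set.Ici (1:ℝ))ᶜ) = 0 := by
    rw [pareto_eq_withDensity, withDensity_apply _ measurableSet_Ici.compl]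
    have hz : ∀ w ∈ (Set.Ici (1:ℝ))ᶜ, pdens β w = 0 :=
      fun w hw => pdens_of_not_mem (by simpa using hw)
    rw [setLIntegral_congr_fun measurableSet_Ici.compl hz, lintegral_zero]
  have hnull : ((pareto β).prod (pareto β)) ((Set.Ici (1:ℝ) ×ˢ Set.Ici (1:ℝ))ᶜ) = 0 := by
    refine measure_mono_null
      (?_ : _ ⊆ ((Set.Ici (1:ℝ))ᶜ ×ˢ (Set.univ : Set ℝ)) ∪
        ((Set.univ : Set ℝ) ×ˢ (Set.Ici (1:ℝ))ᶜ)) ?_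
    · intro q hq
      simp only [Set.mem_compl_iff, Set.mem_prod, not_and_or] at hq
      rcases hq with h' | h'
      · exact Or.inl ⟨h', trivial⟩
      · exact Or.inr ⟨trivial, h'⟩
    · refine measure_union_null ?_ ?_
      · rw [Measure.prod_prod, hc, zero_mul]
      · rw [Measure.prod_prod, hc, mul_zero]
  have hsq : ∀ᵐ q ∂((pareto β).prod (pareto β)), q ∈ Set.Ici (1:ℝ) ×ˢ Set.Ici (1:ℝ) := by
    rw [ae_iff]
    exact hnull
  have hFnn' : 0 ≤ᵐ[(pareto β).prod (pareto β)] F :=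
    hsq.mono (fun q hq => hFnn q hq.1 hq.2)
  rw [integral_eq_lintegral_of_nonneg_ae hFnn' hF.aestronglyMeasurable]
  have hmeasF : Measurable fun q : ℝ × ℝ => ENNReal.ofReal (F q) := hF.ennreal_ofReal
  have step : ∫⁻ q, ENNReal.ofReal (F q) ∂((pareto β).prod (pareto β))
      ≤ ENNReal.ofReal M := by
    rw [MeasureTheory.lintegral_prod _ hmeasF.aemeasurable]
    have inner_eq : ∀ w1 : ℝ, (∫⁻ w2, ENNReal.ofReal (F (w1, w2)) ∂(pareto β))
        = ∫⁻ w2, pdens β w2 * ENNReal.ofReal (F (w1, w2)) ∂volume := by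
      intro w1
      have hg : Measurable fun w2 : ℝ => ENNReal.ofReal (F (w1, w2)) :=
        hmeasF.comp measurable_prodMk_left
      rw [pareto_eq_withDensity, lintegral_withDensity_eq_lintegral_mul _ hdm hg]
      rfl
    simp_rw [inner_eq]
    have houter : Measurable fun w1 : ℝ =>
        ∫⁻ w2, pdens β w2 * ENNReal.ofReal (F (w1, w2)) ∂volume :=
      Measurable.lintegral_prod_right ((hdm.comp measurable_snd).mul hmeasF)
    rw [pareto_eq_withDensity, lintegral_withDensity_eq_lintegral_mul _ hdm houter]
    exact h
  calc (∫⁻ q, ENNReal.ofReal (F q) ∂((pareto β).prod (pareto β))).toReal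
      ≤ (ENNReal.ofReal M).toReal := ENNReal.toReal_mono ENNReal.ofReal_ne_top step
    _ = M := ENNReal.toReal_ofReal hM

lemma case_lt (β η rα : ℝ) (hβ : 0 < β) (hb : β < 1) (hη : 0 < η) (hrα : η < rα) :
    ∫⁻ w1, pdens β w1 * ∫⁻ w2, pdens β w2 *
        ENNReal.ofReal (Set.indicator {q : ℝ × ℝ | q.1 * q.2 < rα / η}
          (fun q : ℝ × ℝ => η * q.1 * q.2 / rα) (w1, w2)) ∂volume ∂volume
      ≤ ENNReal.ofReal (β ^ 2 / (1 - β) * (rα / η) ^ (-β) * Real.log (rα / η)) := by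
  have hrα0 : 0 < rα := hη.trans hrα
  obtain ⟨R, hRdef⟩ : ∃ R : ℝ, R = rα / η := ⟨_, rfl⟩
  rw [← hRdef]
  have hR : 1 < R := hRdef ▸ (one_lt_div hη).2 hrα
  have hRpos : 0 < R := lt_trans zero_lt_one hR
  have hrw : rα = η * R := by rw [hRdef]; field_simp
  have h1b : (0:ℝ) < 1 - β := by linarith
  have hne : (-β : ℝ) ≠ -1 := by intro hh; linarith
  have hne2 : (-β + 1 : ℝ) ≠ 0 := by intro hh; linarith
  -- inner bound
  have inner : ∀ w1 : ℝ, 1 ≤ w1 → w1 < R →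
      (∫⁻ w2, pdens β w2 *
        ENNReal.ofReal (Set.indicator {q : ℝ × ℝ | q.1 * q.2 < R}
          (fun q : ℝ × ℝ => η * q.1 * q.2 / rα) (w1, w2)) ∂volume)
      ≤ ENNReal.ofReal ((β / (1 - β) * R ^ (-β)) * w1 ^ β) := by
    intro w1 h1 h2
    have hw1p : (0:ℝ) < w1 := lt_of_lt_of_le zero_lt_one h1
    have hT1 : (1:ℝ) ≤ R / w1 := (one_le_div hw1p).2 h2.le
    have hcnn : (0:ℝ) ≤ β * η * w1 / rα :=
      div_nonneg (mul_nonneg (mul_nonneg hβ.le hη.le) hw1p.le) hrα0.le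
    calc (∫⁻ w2, pdens β w2 *
        ENNReal.ofReal (Set.indicator {q : ℝ × ℝ | q.1 * q.2 < R}
          (fun q : ℝ × ℝ => η * q.1 * q.2 / rα) (w1, w2)) ∂volume)
        ≤ ∫⁻ w2, Set.indicator (Set.Ico 1 (R / w1))
            (fun w2 => ENNReal.ofReal (β * η * w1 / rα * w2 ^ (-β))) w2 ∂volume := by
          apply lintegral_mono
          intro w2
          dsimp only
          by_cases hmem : w2 ∈ Set.Ico 1 (R / w1)
          · rw [Set.indicator_of_mem hmem]
            obtain ⟨ha, hbb⟩ := hmem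
            have hw2p : (0:ℝ) < w2 := lt_of_lt_of_le zero_lt_one ha
            have hS : (w1, w2) ∈ {q : ℝ × ℝ | q.1 * q.2 < R} := by
              simp only [Set.mem_setOf_eq]
              calc w1 * w2 < w1 * (R / w1) := mul_lt_mul_of_pos_left hbb hw1p
                _ = R := by field_simp
            rw [Set.indicator_of_mem hS, pdens_of_mem ha,
              ← ENNReal.ofReal_mul (mul_nonneg hβ.le (Real.rpow_nonneg hw2p.le _))]
            apply ENNReal.ofReal_le_ofReal
            apply le_of_eq
            have e : w2 ^ (-β - 1) * w2 ^ (1:ℝ) = w2 ^ (-β) := by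
              rw [← Real.rpow_add hw2p, show -β - 1 + 1 = -β by ring]
            rw [Real.rpow_one] at e
            linear_combination (β * η * w1 / rα) * e
          · rw [Set.indicator_of_notMem hmem]
            by_cases ha : 1 ≤ w2
            · have hbb : ¬ w2 < R / w1 := fun hh => hmem ⟨ha, hh⟩
              push_neg at hbb
              have hS : (w1, w2) ∉ {q : ℝ × ℝ | q.1 * q.2 < R} := by
                simp only [Set.mem_setOf_eq, not_lt]
                calc R = w1 * (R / w1) := by field_simp
                  _ ≤ w1 * w2 := mul_le_mul_of_nonneg_left hbb hw1p.le
              rw [Set.indicator_of_notMem hS, ENNReal.ofReal_zero, mul_zero]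
            · rw [pdens_of_not_mem ha, zero_mul]
      _ = ∫⁻ w2 in Set.Ico 1 (R / w1),
            ENNReal.ofReal (β * η * w1 / rα * w2 ^ (-β)) ∂volume :=
          lintegral_indicator measurableSet_Ico _
      _ = ENNReal.ofReal (β * η * w1 / rα * (((R / w1) ^ (-β + 1) - 1) / (-β + 1))) :=
          lint_Ico_rpow hcnn hT1 hne
      _ ≤ ENNReal.ofReal ((β / (1 - β) * R ^ (-β)) * w1 ^ β) := by
          apply ENNReal.ofReal_le_ofReal
          have e1 : (R / w1) ^ (-β + 1) = R ^ (-β + 1) / w1 ^ (-β + 1) :=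
            Real.div_rpow hRpos.le hw1p.le _
          have e2 : R ^ (-β + 1) = R ^ (-β) * R := by
            rw [Real.rpow_add hRpos, Real.rpow_one]
          have hw1ne : w1 ^ (-β + 1) ≠ 0 := (Real.rpow_pos_of_pos hw1p _).ne'
          have e3 : w1 ^ (-β + 1) * w1 ^ β = w1 := by
            rw [← Real.rpow_add hw1p, show -β + 1 + β = (1:ℝ) by ring, Real.rpow_one]
          have e4 : w1 ^ β = w1 / w1 ^ (-β + 1) := by
            rw [eq_div_iff hw1ne]; linear_combination e3
          calc β * η * w1 / rα * (((R / w1) ^ (-β + 1) - 1) / (-β + 1))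
              ≤ β * η * w1 / rα * ((R / w1) ^ (-β + 1) / (-β + 1)) := by
                gcongr <;> linarith
              _ = (β / (1 - β) * R ^ (-β)) * w1 ^ β := by
                rw [e1, e2, hrw, e4]
                field_simp
                ring
  -- outer bound
  calc ∫⁻ w1, pdens β w1 * ∫⁻ w2, pdens β w2 *
        ENNReal.ofReal (Set.indicator {q : ℝ × ℝ | q.1 * q.2 < R}
          (fun q : ℝ × ℝ => η * q.1 * q.2 / rα) (w1, w2)) ∂volume ∂volume
      ≤ ∫⁻ w1, Set.indicator (Set.Ico 1 R)
          (fun w1 => ENNReal.ofReal ((β * (β / (1 - β) * R ^ (-β))) * w1⁻¹)) w1 ∂volume := by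
        apply lintegral_mono
        intro w1
        dsimp only
        by_cases h1 : 1 ≤ w1
        · by_cases h2 : w1 < R
          · have hw1p : (0:ℝ) < w1 := lt_of_lt_of_le zero_lt_one h1
            rw [Set.indicator_of_mem (Set.mem_Ico.2 ⟨h1, h2⟩), pdens_of_mem h1]
            calc ENNReal.ofReal (β * w1 ^ (-β - 1)) * _
                ≤ ENNReal.ofReal (β * w1 ^ (-β - 1)) *
                    ENNReal.ofReal ((β / (1 - β) * R ^ (-β)) * w1 ^ β) :=
                  mul_le_mul_right (inner w1 h1 h2) _
              _ = ENNReal.ofReal ((β * w1 ^ (-β - 1)) *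
                    ((β / (1 - β) * R ^ (-β)) * w1 ^ β)) :=
                  (ENNReal.ofReal_mul
                    (mul_nonneg hβ.le (Real.rpow_nonneg hw1p.le _))).symm
              _ = ENNReal.ofReal ((β * (β / (1 - β) * R ^ (-β))) * w1⁻¹) := by
                  congr 1
                  have e : w1 ^ (-β - 1) * w1 ^ β = w1⁻¹ := by
                    rw [← Real.rpow_add hw1p, show -β - 1 + β = (-1 : ℝ) by ring,
                      Real.rpow_neg_one]
                  linear_combination (β * (β / (1 - β) * R ^ (-β))) * e
          · push_neg at h2
            have hz : (∫⁻ w2, pdens β w2 *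
                ENNReal.ofReal (Set.indicator {q : ℝ × ℝ | q.1 * q.2 < R}
                  (fun q : ℝ × ℝ => η * q.1 * q.2 / rα) (w1, w2)) ∂volume) = 0 := by
              have hzz : ∀ w2 : ℝ, pdens β w2 *
                  ENNReal.ofReal (Set.indicator {q : ℝ × ℝ | q.1 * q.2 < R}
                    (fun q : ℝ × ℝ => η * q.1 * q.2 / rα) (w1, w2)) = 0 := by
                intro w2
                by_cases ha : 1 ≤ w2
                · have hS : (w1, w2) ∉ {q : ℝ × ℝ | q.1 * q.2 < R} := by
                    simp only [Set.mem_setOf_eq, not_lt]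
                    calc R ≤ w1 := h2
                      _ ≤ w1 * w2 :=
                        le_mul_of_one_le_right (by linarith : (0:ℝ) ≤ w1) ha
                  rw [Set.indicator_of_notMem hS, ENNReal.ofReal_zero, mul_zero]
                · rw [pdens_of_not_mem ha, zero_mul]
              simp only [hzz, lintegral_zero]
            rw [hz, mul_zero]
            exact zero_le
        · rw [pdens_of_not_mem h1, zero_mul]
          exact zero_le
    _ = ∫⁻ w1 in Set.Ico 1 R,
          ENNReal.ofReal ((β * (β / (1 - β) * R ^ (-β))) * w1⁻¹) ∂volume :=
        lintegral_indicator measurableSet_Ico _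
    _ = ENNReal.ofReal ((β * (β / (1 - β) * R ^ (-β))) * Real.log R) :=
        lint_Ico_inv (mul_nonneg hβ.le (mul_nonneg (div_nonneg hβ.le h1b.le)
          (Real.rpow_nonneg hRpos.le _))) hR.le
    _ = ENNReal.ofReal (β ^ 2 / (1 - β) * R ^ (-β) * Real.log R) := by
        congr 1
        ring

lemma case_gt (β η rα : ℝ) (hβ : 0 < β) (hb : 1 < β) (hη : 0 < η) (hrα0 : 0 < rα) :
    ∫⁻ w1, pdens β w1 * ∫⁻ w2, pdens β w2 *
        ENNReal.ofReal (Set.indicator {q : ℝ × ℝ | q.1 * q.2 < rα / η}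
          (fun q : ℝ × ℝ => η * q.1 * q.2 / rα) (w1, w2)) ∂volume ∂volume
      ≤ ENNReal.ofReal (β ^ 2 * η / (β - 1) ^ 2 * rα⁻¹) := by
  have hp : (-β : ℝ) < -1 := by linarith
  have hpos : (0:ℝ) < -1 / (-β + 1) := div_pos_iff.2 (Or.inr ⟨by linarith, by linarith⟩)
  -- inner bound
  have inner : ∀ w1 : ℝ, 1 ≤ w1 →
      (∫⁻ w2, pdens β w2 *
        ENNReal.ofReal (Set.indicator {q : ℝ × ℝ | q.1 * q.2 < rα / η}
          (fun q : ℝ × ℝ => η * q.1 * q.2 / rα) (w1, w2)) ∂volume)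
      ≤ ENNReal.ofReal (β * η * w1 / rα * (-1 / (-β + 1))) := by
    intro w1 h1
    have hw1p : (0:ℝ) < w1 := lt_of_lt_of_le zero_lt_one h1
    have hcnn : (0:ℝ) ≤ β * η * w1 / rα :=
      div_nonneg (mul_nonneg (mul_nonneg hβ.le hη.le) hw1p.le) hrα0.le
    calc (∫⁻ w2, pdens β w2 *
        ENNReal.ofReal (Set.indicator {q : ℝ × ℝ | q.1 * q.2 < rα / η}
          (fun q : ℝ × ℝ => η * q.1 * q.2 / rα) (w1, w2)) ∂volume)
        ≤ ∫⁻ w2, Set.indicator (Set.Ici 1)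
            (fun w2 => ENNReal.ofReal (β * η * w1 / rα * w2 ^ (-β))) w2 ∂volume := by
          apply lintegral_mono
          intro w2
          dsimp only
          by_cases ha : 1 ≤ w2
          · rw [Set.indicator_of_mem (Set.mem_Ici.2 ha), pdens_of_mem ha]
            have hw2p : (0:ℝ) < w2 := lt_of_lt_of_le zero_lt_one ha
            have hind : Set.indicator {q : ℝ × ℝ | q.1 * q.2 < rα / η}
                (fun q : ℝ × ℝ => η * q.1 * q.2 / rα) (w1, w2) ≤ η * w1 * w2 / rα := by
              by_cases hS : (w1, w2) ∈ {q : ℝ × ℝ | q.1 * q.2 < rα / η}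
              · rw [Set.indicator_of_mem hS]
              · rw [Set.indicator_of_notMem hS]
                positivity
            calc ENNReal.ofReal (β * w2 ^ (-β - 1)) * ENNReal.ofReal _
                ≤ ENNReal.ofReal (β * w2 ^ (-β - 1)) *
                    ENNReal.ofReal (η * w1 * w2 / rα) :=
                  mul_le_mul_right (ENNReal.ofReal_le_ofReal hind) _
              _ = ENNReal.ofReal ((β * w2 ^ (-β - 1)) * (η * w1 * w2 / rα)) :=
                  (ENNReal.ofReal_mul
                    (mul_nonneg hβ.le (Real.rpow_nonneg hw2p.le _))).symm
              _ = ENNReal.ofReal (β * η * w1 / rα * w2 ^ (-β)) := by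
                  congr 1
                  have e : w2 ^ (-β - 1) * w2 ^ (1:ℝ) = w2 ^ (-β) := by
                    rw [← Real.rpow_add hw2p, show -β - 1 + 1 = -β by ring]
                  rw [Real.rpow_one] at e
                  linear_combination (β * η * w1 / rα) * e
          · rw [pdens_of_not_mem ha, zero_mul]
            exact zero_le
      _ = ∫⁻ w2 in Set.Ici (1:ℝ),
            ENNReal.ofReal (β * η * w1 / rα * w2 ^ (-β)) ∂volume :=
          lintegral_indicator measurableSet_Ici _
      _ = ENNReal.ofReal (β * η * w1 / rα * (-1 / (-β + 1))) :=
          lint_Ici_rpow hcnn hp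
  -- outer bound
  calc ∫⁻ w1, pdens β w1 * ∫⁻ w2, pdens β w2 *
        ENNReal.ofReal (Set.indicator {q : ℝ × ℝ | q.1 * q.2 < rα / η}
          (fun q : ℝ × ℝ => η * q.1 * q.2 / rα) (w1, w2)) ∂volume ∂volume
      ≤ ∫⁻ w1, Set.indicator (Set.Ici 1)
          (fun w1 => ENNReal.ofReal
            ((β * (β * η / rα * (-1 / (-β + 1)))) * w1 ^ (-β))) w1 ∂volume := by
        apply lintegral_mono
        intro w1
        dsimp only
        by_cases h1 : 1 ≤ w1
        · have hw1p : (0:ℝ) < w1 := lt_of_lt_of_le zero_lt_one h1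
          rw [Set.indicator_of_mem (Set.mem_Ici.2 h1), pdens_of_mem h1]
          calc ENNReal.ofReal (β * w1 ^ (-β - 1)) * _
              ≤ ENNReal.ofReal (β * w1 ^ (-β - 1)) *
                  ENNReal.ofReal (β * η * w1 / rα * (-1 / (-β + 1))) :=
                mul_le_mul_right (inner w1 h1) _
            _ = ENNReal.ofReal ((β * w1 ^ (-β - 1)) *
                  (β * η * w1 / rα * (-1 / (-β + 1)))) :=
                (ENNReal.ofReal_mul
                  (mul_nonneg hβ.le (Real.rpow_nonneg hw1p.le _))).symm
            _ = ENNReal.ofReal ((β * (β * η / rα * (-1 / (-β + 1)))) * w1 ^ (-β)) := by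
                congr 1
                have e : w1 ^ (-β - 1) * w1 ^ (1:ℝ) = w1 ^ (-β) := by
                  rw [← Real.rpow_add hw1p, show -β - 1 + 1 = -β by ring]
                rw [Real.rpow_one] at e
                linear_combination (β * (β * η / rα * (-1 / (-β + 1)))) * e
        · rw [pdens_of_not_mem h1, zero_mul]
          exact zero_le
    _ = ∫⁻ w1 in Set.Ici (1:ℝ),
          ENNReal.ofReal ((β * (β * η / rα * (-1 / (-β + 1)))) * w1 ^ (-β)) ∂volume :=
        lintegral_indicator measurableSet_Ici _
    _ = ENNReal.ofReal ((β * (β * η / rα * (-1 / (-β + 1)))) * (-1 / (-β + 1))) :=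
        lint_Ici_rpow (mul_nonneg hβ.le (mul_nonneg
          (div_nonneg (mul_nonneg hβ.le hη.le) hrα0.le) hpos.le)) hp
    _ = ENNReal.ofReal (β ^ 2 * η / (β - 1) ^ 2 * rα⁻¹) := by
        congr 1
        have hb1 : (β - 1 : ℝ) ≠ 0 := by intro hh; linarith
        have hb2 : (-β + 1 : ℝ) ≠ 0 := by intro hh; linarith
        field_simp
        ring

theorem stmt9 (β α η : ℝ) (hβ : 0 < β) (hβ1 : β ≠ 1) (hα : 0 < α) (hη : 0 < η) :
    ∃ c₁ c₂ c₃ : ℝ, 0 ≤ c₁ ∧ 0 ≤ c₂ ∧ 0 ≤ c₃ ∧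
      ∀ r : ℝ, max 1 (η ^ (1 / α)) < r →
        ∫ p : ℝ × ℝ,
            Set.indicator {q : ℝ × ℝ | q.1 * q.2 < r ^ α / η}
              (fun q : ℝ × ℝ => η * q.1 * q.2 / r ^ α) p
            ∂((pareto β).prod (pareto β)) ≤
          c₁ * r ^ (-α) + c₂ * r ^ (-(α * β)) * Real.log r + c₃ * r ^ (-(α * β)) := by

  rcases lt_or_gt_of_ne hβ1 with hb | hb
  · -- β < 1
    have h1b : (0:ℝ) < 1 - β := by linarith
    refine ⟨0, β ^ 2 / (1 - β) * η ^ β * α, β ^ 2 / (1 - β) * η ^ β * |Real.log η|,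
      le_refl 0,
      mul_nonneg (mul_nonneg (div_nonneg (sq_nonneg β) h1b.le)
        (Real.rpow_nonneg hη.le β)) hα.le,
      mul_nonneg (mul_nonneg (div_nonneg (sq_nonneg β) h1b.le)
        (Real.rpow_nonneg hη.le β)) (abs_nonneg _), ?_⟩
    intro r hr
    have hr1 : 1 < r := lt_of_le_of_lt (le_max_left _ _) hr
    have hrpos : 0 < r := lt_trans zero_lt_one hr1
    have hηr : η ^ (1 / α) < r := lt_of_le_of_lt (le_max_right _ _) hr
    have hrα : η < r ^ α := by
      have h1 : (η ^ (1 / α)) ^ α < r ^ α :=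
        Real.rpow_lt_rpow (Real.rpow_nonneg hη.le _) hηr hα
      rwa [← Real.rpow_mul hη.le, one_div, inv_mul_cancel₀ hα.ne', Real.rpow_one] at h1
    have hrα0 : 0 < r ^ α := Real.rpow_pos_of_pos hrpos α
    have hR1 : 1 < r ^ α / η := (one_lt_div hη).2 hrα
    have hMnn : 0 ≤ β ^ 2 / (1 - β) * (r ^ α / η) ^ (-β) * Real.log (r ^ α / η) :=
      mul_nonneg (mul_nonneg (div_nonneg (sq_nonneg β) h1b.le)
        (Real.rpow_nonneg (div_nonneg hrα0.le hη.le) _)) (Real.log_nonneg hR1.le)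
    have hFm : Measurable (Set.indicator {q : ℝ × ℝ | q.1 * q.2 < r ^ α / η}
        (fun q : ℝ × ℝ => η * q.1 * q.2 / r ^ α)) :=
      Measurable.indicator
        (((measurable_const.mul measurable_fst).mul measurable_snd).div_const _)
        (measurableSet_lt (measurable_fst.mul measurable_snd) measurable_const)
    have hFnn : ∀ q : ℝ × ℝ, 1 ≤ q.1 → 1 ≤ q.2 →
        0 ≤ Set.indicator {q : ℝ × ℝ | q.1 * q.2 < r ^ α / η}
          (fun q : ℝ × ℝ => η * q.1 * q.2 / r ^ α) q := by
      intro q h1 h2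
      apply Set.indicator_apply_nonneg
      intro _
      exact div_nonneg (mul_nonneg (mul_nonneg hη.le (by linarith)) (by linarith)) hrα0.le
    have hmain := reduction β _ hMnn _ hFm hFnn (case_lt β η (r ^ α) hβ hb hη hrα)
    refine hmain.trans ?_
    have eX : (r ^ α / η) ^ (-β) = η ^ β * r ^ (-(α * β)) := by
      rw [Real.div_rpow (Real.rpow_nonneg hrpos.le α) hη.le,
        ← Real.rpow_mul hrpos.le, Real.rpow_neg hη.le, div_eq_mul_inv, inv_inv,
        show α * -β = -(α * β) by ring, mul_comm]
    have eL : Real.log (r ^ α / η) = α * Real.log r - Real.log η := by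
      rw [Real.log_div hrα0.ne' hη.ne', Real.log_rpow hrpos]
    rw [eX, eL, zero_mul, zero_add]
    have h1 : -Real.log η ≤ |Real.log η| := neg_le_abs _
    have hAX : 0 ≤ β ^ 2 / (1 - β) * η ^ β * r ^ (-(α * β)) :=
      mul_nonneg (mul_nonneg (div_nonneg (sq_nonneg β) h1b.le)
        (Real.rpow_nonneg hη.le β)) (Real.rpow_nonneg hrpos.le _)
    nlinarith [mul_le_mul_of_nonneg_left h1 hAX]
  · -- β > 1
    refine ⟨β ^ 2 * η / (β - 1) ^ 2, 0, 0,
      div_nonneg (mul_nonneg (sq_nonneg β) hη.le) (sq_nonneg _),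
      le_refl 0, le_refl 0, ?_⟩
    intro r hr
    have hr1 : 1 < r := lt_of_le_of_lt (le_max_left _ _) hr
    have hrpos : 0 < r := lt_trans zero_lt_one hr1
    have hrα0 : 0 < r ^ α := Real.rpow_pos_of_pos hrpos α
    have hMnn : 0 ≤ β ^ 2 * η / (β - 1) ^ 2 * (r ^ α)⁻¹ :=
      mul_nonneg (div_nonneg (mul_nonneg (sq_nonneg β) hη.le) (sq_nonneg _))
        (inv_nonneg.2 hrα0.le)
    have hFm : Measurable (Set.indicator {q : ℝ × ℝ | q.1 * q.2 < r ^ α / η}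
        (fun q : ℝ × ℝ => η * q.1 * q.2 / r ^ α)) :=
      Measurable.indicator
        (((measurable_const.mul measurable_fst).mul measurable_snd).div_const _)
        (measurableSet_lt (measurable_fst.mul measurable_snd) measurable_const)
    have hFnn : ∀ q : ℝ × ℝ, 1 ≤ q.1 → 1 ≤ q.2 →
        0 ≤ Set.indicator {q : ℝ × ℝ | q.1 * q.2 < r ^ α / η}
          (fun q : ℝ × ℝ => η * q.1 * q.2 / r ^ α) q := by
      intro q h1 h2
      apply Set.indicator_apply_nonneg
      intro _
      exact div_nonneg (mul_nonneg (mul_nonneg hη.le (by linarith)) (by linarith)) hrα0.le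
    have hmain := reduction β _ hMnn _ hFm hFnn (case_gt β η (r ^ α) hβ hb hη hrα0)
    refine hmain.trans ?_
    rw [Real.rpow_neg hrpos.le]
    simp
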